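/- Let k be an algebraically closed field of characteristic p > 0 and A ∈ GL_n(k) an invertible matrix. Then the set of solutions x ∈ k^n of the equation x^{(p)} = A x, where x^{(p)} denotes the vector obtained by raising each coordinate of x to the p-th power, is an 𝔽_p-vector subspace of k^n of dimension exactly n over 𝔽_p. -/

import Mathlib

open Polynomial Matrix Finset

section LangAux
variable {p : ℕ} [Fact p.Prime] {k : Type} [Field k] [IsAlgClosed k] [CharP k p]

variable {p : ℕ} [Fact p.Prime] {k : Type} [Field k] [IsAlgClosed k] [CharP k p]

lemma ASdeg (c : k) : (X ^ p - X - C c : k[X]).degree = p := by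
  have hp2 : 2 ≤ p := (Fact.out : p.Prime).two_le
  have h1 : ((X : k[X])).degree < (X ^ p : k[X]).degree := by
    rw [degree_X_pow, degree_X]
    exact_mod_cast by omega
  have h2 : ((X : k[X]) ^ p - X).degree = (p : WithBot ℕ) := by
    rw [degree_sub_eq_left_of_degree_lt h1, degree_X_pow]
  have h3 : (C c : k[X]).degree < ((X : k[X]) ^ p - X).degree := by
    rw [h2]
    refine lt_of_le_of_lt degree_C_le ?_
    exact_mod_cast Nat.pos_of_ne_zero (by omega)
  rw [← h2]
  exact degree_sub_eq_left_of_degree_lt h3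

lemma exists_AS_root (c : k) : ∃ t : k, t ^ p - t = c := by
  have hp2 : 2 ≤ p := (Fact.out : p.Prime).two_le
  obtain ⟨t, ht⟩ := IsAlgClosed.exists_root (X ^ p - X - C c) (by
    rw [ASdeg c]
    intro h
    have hh : p = 0 := by exact_mod_cast h
    omega)
  simp only [IsRoot, eval_sub, eval_pow, eval_X, eval_C] at ht
  exact ⟨t, by linear_combination ht⟩

lemma pow_p_eq_self_iff [Algebra (ZMod p) k] (s : k) :
    s ^ p = s ↔ ∃ a : ZMod p, algebraMap (ZMod p) k a = s := by
  classical
  have hp2 : 2 ≤ p := (Fact.out : p.Prime).two_le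
  constructor
  · intro hs
    by_contra hcon
    push_neg at hcon
    set g : k[X] := X ^ p - X with hg
    have hgdeg : g.degree = p := by
      have := ASdeg (p := p) (0 : k)
      simpa [hg] using this
    have hgnat : g.natDegree = p := natDegree_eq_of_degree_eq_some hgdeg
    have hgne : g ≠ 0 := by
      intro h; rw [h] at hgdeg; simp at hgdeg
    set T : Finset k := (Finset.univ : Finset (ZMod p)).image (algebraMap (ZMod p) k) with hT
    have hTcard : T.card = p := by
      rw [hT, Finset.card_image_of_injective _ (algebraMap (ZMod p) k).injective]
      simp [ZMod.card]
    have hsub : insert s T ⊆ g.roots.toFinset := by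
      intro x hx
      rw [Multiset.mem_toFinset, mem_roots hgne]
      simp only [Finset.mem_insert, hT, Finset.mem_image] at hx
      rcases hx with rfl | ⟨a, _, rfl⟩
      · simp [IsRoot, hg, hs]
      · simp only [IsRoot, hg, eval_sub, eval_pow, eval_X, sub_eq_zero]
        rw [← map_pow, ZMod.pow_card]
    have hsT : s ∉ T := by
      simp only [hT, Finset.mem_image]
      rintro ⟨a, _, ha⟩; exact hcon a ha
    have h1 : p + 1 ≤ g.roots.toFinset.card := by
      rw [← hTcard, ← Finset.card_insert_of_notMem hsT]
      exact Finset.card_le_card hsub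
    have h2 : g.roots.toFinset.card ≤ p := by
      calc g.roots.toFinset.card ≤ Multiset.card g.roots := g.roots.toFinset_card_le
        _ ≤ g.natDegree := g.card_roots'
        _ = p := hgnat
    omega
  · rintro ⟨a, rfl⟩
    rw [← map_pow, ZMod.pow_card]


variable [Algebra (ZMod p) k]

lemma exists_nonzero_sol {n : ℕ} (hn : 0 < n) (A : Matrix (Fin n) (Fin n) k)
    (hA : IsUnit A.det) :
    ∃ v : Fin n → k, v ≠ 0 ∧ (fun i => v i ^ p) = A.mulVec v := by
  classical
  have hp2 : 2 ≤ p := (Fact.out : p.Prime).two_le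
  have hppos : 0 < p := by omega
  set B := A⁻¹ with hB
  have hAB : A * B = 1 := Matrix.mul_nonsing_inv A hA
  set Φ : (Fin n → k) → (Fin n → k) := fun x i => x i ^ p with hΦ
  set ψ : (Fin n → k) → (Fin n → k) := fun x => B *ᵥ (Φ x) with hψ
  have hψfix : ∀ x, ψ x = x → Φ x = A *ᵥ x := by
    intro x hx
    have : A *ᵥ (ψ x) = A *ᵥ x := by rw [hx]
    rwa [hψ, Matrix.mulVec_mulVec, hAB, Matrix.one_mulVec] at this
  have hψ0 : ∀ x : Fin n → k, x ≠ 0 → ψ x ≠ 0 := by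
    intro x hx h0
    apply hx
    have h1 : A *ᵥ (ψ x) = 0 := by rw [h0, Matrix.mulVec_zero]
    rw [hψ, Matrix.mulVec_mulVec, hAB, Matrix.one_mulVec] at h1
    funext i
    have := congrFun h1 i
    simp only [hΦ, Pi.zero_apply] at this ⊢
    exact pow_eq_zero_iff (by omega) |>.mp this
  set w : Fin n → k := Pi.single (⟨0, hn⟩ : Fin n) (1 : k) with hw
  have hwne : w ≠ 0 := by
    intro h
    have := congrFun h ⟨0, hn⟩
    simp [hw] at this
  set u : ℕ → (Fin n → k) := fun i => ψ^[i] w with hu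
  have husucc : ∀ i, u (i + 1) = ψ (u i) := by
    intro i; rw [hu]; exact Function.iterate_succ_apply' ψ i w
  have hu0 : ∀ i, u i ≠ 0 := by
    intro i; induction i with
    | zero => simpa [hu] using hwne
    | succ i ih => rw [husucc]; exact hψ0 _ ih
  -- linear independence of initial segments
  have key : ∀ j : ℕ, (∀ i, i < j → u i ∉ Submodule.span k (Set.range fun t : Fin i => u t)) →
      LinearIndependent k (fun i : Fin j => u i) := by
    intro j
    induction j with
    | zero => intro _; exact linearIndependent_empty_type
    | succ j ih =>
      intro h
      have heq : (fun i : Fin (j+1) => u i) = Fin.snoc (fun i : Fin j => u i) (u j) := by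
        funext i
        refine Fin.lastCases ?_ (fun i' => ?_) i
        · simp [Fin.snoc_last]
        · simp [Fin.snoc_castSucc]
      rw [heq, linearIndependent_fin_snoc]
      exact ⟨ih (fun i hi => h i (by omega)), h j (by omega)⟩
  have hPex : ∃ m, u m ∈ Submodule.span k (Set.range fun t : Fin m => u t) := by
    by_contra hcon
    push_neg at hcon
    have li : LinearIndependent k (fun i : Fin (n+1) => u i) :=
      key (n+1) (fun i _ => hcon i)
    have hle := li.fintype_card_le_finrank
    rw [Fintype.card_fin, Module.finrank_pi] at hle
    simp only [Fintype.card_fin] at hle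
    omega
  set m := Nat.find hPex with hmdef
  have hm : u m ∈ Submodule.span k (Set.range fun t : Fin m => u t) := Nat.find_spec hPex
  have hmin : ∀ i, i < m → u i ∉ Submodule.span k (Set.range fun t : Fin i => u t) :=
    fun i hi => Nat.find_min hPex hi
  have li : LinearIndependent k (fun i : Fin m => u i) := key m hmin
  have hm1 : 1 ≤ m := by
    rcases Nat.eq_zero_or_pos m with h0 | h1
    · exfalso
      rw [h0] at hm
      have : (Set.range fun t : Fin 0 => u t) = ∅ := by
        simp [Set.range_eq_empty]
      rw [this, Submodule.span_empty, Submodule.mem_bot] at hm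
      exact hu0 0 hm
    · exact h1
  clear hmdef
  clear_value m
  obtain ⟨m', rfl⟩ : ∃ m', m = m' + 1 := ⟨m - 1, by omega⟩
  -- coefficients of the span relation
  obtain ⟨aF, haF⟩ := (Submodule.mem_span_range_iff_exists_fun k).mp hm
  set a : ℕ → k := fun i => if h : i < m' + 1 then aF ⟨i, h⟩ else 0 with ha
  have ha_sum : ∑ i ∈ range (m' + 1), a i • u i = u (m' + 1) := by
    rw [← haF, ← Fin.sum_univ_eq_sum_range (fun i => a i • u i) (m' + 1)]
    refine Finset.sum_congr rfl (fun i _ => ?_)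
    simp [ha, i.is_lt, not_lt.mpr (Nat.le_of_lt_succ i.is_lt)]
  have haj : ∃ j, j < m' + 1 ∧ a j ≠ 0 := by
    by_contra hcon
    push_neg at hcon
    apply hu0 (m' + 1)
    rw [← ha_sum]
    refine Finset.sum_eq_zero (fun i hi => ?_)
    rw [hcon i (Finset.mem_range.mp hi), zero_smul]
  obtain ⟨j, hjm, hajne⟩ := haj
  -- the auxiliary polynomials
  set Q : ℕ → k[X] := fun i =>
    Nat.rec (C (a 0) * X ^ p) (fun i Qi => Qi ^ p + C (a (i+1)) * X ^ p) i with hQ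
  have hQ0 : Q 0 = C (a 0) * X ^ p := rfl
  have hQs : ∀ i, Q (i+1) = Q i ^ p + C (a (i+1)) * X ^ p := fun i => rfl
  have hQexp : ∀ i, ∃ D : k[X], Q i = expand k p D := by
    intro i; induction i with
    | zero => exact ⟨C (a 0) * X, by rw [hQ0, _root_.map_mul, expand_C, expand_X]⟩
    | succ i ih =>
      obtain ⟨D, hD⟩ := ih
      exact ⟨D ^ p + C (a (i+1)) * X, by
        rw [hQs, hD, map_add, map_pow, _root_.map_mul, expand_C, expand_X]⟩
  have hQcoeff0 : ∀ i e, ¬ p ∣ e → (Q i).coeff e = 0 := by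
    intro i e he
    obtain ⟨D, hD⟩ := hQexp i
    rw [hD, coeff_expand hppos, if_neg he]
  have hpowc : ∀ (g : k[X]) (e : ℕ), (g ^ p).coeff (p * e) = (g.coeff e) ^ p := by
    intro g e
    rw [← Polynomial.map_frobenius_expand (p := p) g, coeff_map, coeff_expand hppos,
      if_pos ⟨e, rfl⟩, Nat.mul_div_cancel_left e hppos, frobenius_def]
  have hcoeffj : ∀ i, j ≤ i → (Q i).coeff (p ^ (i - j + 1)) = a j ^ (p ^ (i - j)) := by
    intro i
    induction i with
    | zero =>
      intro hij
      obtain rfl : j = 0 := by omega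
      simp only [Nat.sub_zero, pow_one, pow_zero, Nat.zero_sub, hQ0, coeff_C_mul, coeff_X_pow,
        if_pos rfl, mul_one, pow_one]
      norm_num
    | succ i ih =>
      intro hij
      rcases Nat.lt_or_ge i j with hlt | hge
      · -- j = i + 1
        obtain rfl : j = i + 1 := by omega
        have e0 : i + 1 - (i + 1) + 1 = 1 := by omega
        have e0' : i + 1 - (i + 1) = 0 := by omega
        rw [e0, e0', pow_one, pow_zero, pow_one, hQs, coeff_add]
        have e1 := hpowc (Q i) 1
        rw [mul_one] at e1
        rw [e1, hQcoeff0 i 1 (fun hdvd => by have := Nat.le_of_dvd one_pos hdvd; omega), zero_pow (by omega : p ≠ 0), zero_add,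
          coeff_C_mul, coeff_X_pow, if_pos rfl, mul_one]
      · -- j ≤ i
        have h0 : i + 1 - j = i - j + 1 := by omega
        have h2 : (p:ℕ) ^ ((i - j + 1) + 1) = p * p ^ (i - j + 1) := by
          rw [pow_succ]; ring
        rw [h0, hQs, coeff_add, h2, hpowc (Q i) _, ih hge, coeff_C_mul, coeff_X_pow]
        have h3 : 2 ≤ p ^ (i - j + 1) := le_trans hp2 (Nat.le_self_pow (by omega) p)
        have h4 : ¬ (p * p ^ (i - j + 1) = p) := by
          intro h
          have h5 : p * p ^ (i - j + 1) = p * 1 := by rw [mul_one]; exact h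
          have := Nat.eq_of_mul_eq_mul_left hppos h5
          omega
        rw [if_neg h4, mul_zero, add_zero, ← pow_mul, ← pow_succ]
  set f : k[X] := Q m' - X with hf
  have hfcne : f.coeff (p ^ (m' - j + 1)) ≠ 0 := by
    have hXc : (X : k[X]).coeff (p ^ (m' - j + 1)) = 0 := by
      rw [coeff_X, if_neg]
      intro h
      have h3 : 2 ≤ p ^ (m' - j + 1) := le_trans hp2 (Nat.le_self_pow (by omega) p)
      omega
    rw [hf, coeff_sub, hcoeffj m' (by omega), hXc, sub_zero]
    exact pow_ne_zero _ hajne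
  have hfne : f ≠ 0 := fun h => hfcne (by rw [h, coeff_zero])
  have hdeg2 : 2 ≤ f.natDegree := by
    have := le_natDegree_of_ne_zero hfcne
    have h3 : 2 ≤ p ^ (m' - j + 1) := le_trans hp2 (Nat.le_self_pow (by omega) p)
    omega
  have hQder : ∀ i, derivative (Q i) = 0 := by
    intro i; induction i with
    | zero =>
      rw [hQ0, derivative_C_mul, derivative_X_pow]
      simp [CharP.cast_eq_zero k p]
    | succ i ih =>
      rw [hQs, derivative_add, derivative_pow, ih, derivative_C_mul, derivative_X_pow]
      simp [CharP.cast_eq_zero k p]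
  have hfder : derivative f = -1 := by
    rw [hf, derivative_sub, hQder, derivative_X, zero_sub]
  have hsep : f.Separable := ⟨0, -1, by rw [hfder]; ring⟩
  have hcard : Fintype.card (f.rootSet k) = f.natDegree :=
    card_rootSet_eq_natDegree hsep (IsAlgClosed.splits _)
  have hQeval0 : ∀ i, (Q i).eval 0 = 0 := by
    intro i; induction i with
    | zero => simp [hQ0, zero_pow (by omega : p ≠ 0)]
    | succ i ih => simp [hQs, ih, zero_pow (by omega : p ≠ 0)]
  have h0mem : (0 : k) ∈ f.rootSet k := by
    rw [mem_rootSet]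
    refine ⟨hfne, ?_⟩
    have : Polynomial.aeval (0:k) f = f.eval 0 := by
      simp [Polynomial.aeval_def, eval]
    rw [this, hf]
    simp [hQeval0 m']
  obtain ⟨t0s, ht0s⟩ := Fintype.exists_ne_of_one_lt_card
    (by omega : 1 < Fintype.card (f.rootSet k)) (⟨0, h0mem⟩ : f.rootSet k)
  set t₀ : k := t0s.1 with ht₀
  have ht₀ne : t₀ ≠ 0 := by
    intro h
    exact ht0s (Subtype.ext (by rw [← ht₀, h]))
  have ht₀root : f.eval t₀ = 0 := by
    have h2 := (mem_rootSet.mp t0s.2).2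
    have : Polynomial.aeval t₀ f = f.eval t₀ := by
      exact congrFun (Polynomial.coe_aeval_eq_eval t₀) f
    rwa [this] at h2
  have hcm : (Q m').eval t₀ = t₀ := by
    rw [hf] at ht₀root
    simp only [eval_sub, eval_X, sub_eq_zero] at ht₀root
    exact ht₀root
  set c : ℕ → k := fun i => (Q i).eval t₀ with hc
  have hc0 : c 0 = a 0 * t₀ ^ p := by simp [hc, hQ0]
  have hcs : ∀ i, c (i+1) = c i ^ p + a (i+1) * t₀ ^ p := by
    intro i; simp [hc, hQs]
  have hcm' : c m' = t₀ := hcm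
  set v : Fin n → k := ∑ i ∈ range (m' + 1), c i • u i with hv
  have hvfin : v = ∑ i : Fin (m' + 1), c i • u i := by
    rw [hv, ← Fin.sum_univ_eq_sum_range (fun i => c i • u i) (m' + 1)]
  have hvne : v ≠ 0 := by
    intro h0
    have := Fintype.linearIndependent_iff.mp li (fun i : Fin (m' + 1) => c i)
      (by rw [← hvfin]; exact h0) (Fin.last m')
    simp only [Fin.val_last] at this
    exact ht₀ne (by rw [← hcm', this])
  have hΦv : Φ v = ∑ i ∈ range (m' + 1), (c i ^ p) • Φ (u i) := by
    funext idx
    simp only [hΦ, hv, Finset.sum_apply, Pi.smul_apply, smul_eq_mul]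
    rw [sum_pow_char]
    exact Finset.sum_congr rfl (fun i _ => by rw [mul_pow])
  have hψv : ψ v = ∑ i ∈ range (m' + 1), (c i ^ p) • u (i + 1) := by
    show B *ᵥ Φ v = _
    rw [hΦv, ← Matrix.mulVecLin_apply, map_sum]
    refine Finset.sum_congr rfl (fun i _ => ?_)
    rw [LinearMap.map_smul, Matrix.mulVecLin_apply,
      show B *ᵥ Φ (u i) = u (i + 1) from (husucc i).symm]
  have hfix : ψ v = v := by
    rw [hψv, Finset.sum_range_succ (fun i => c i ^ p • u (i + 1)) m', ← ha_sum,
      Finset.smul_sum]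
    have hlast : ∑ i ∈ range (m' + 1), c m' ^ p • (a i • u i)
        = ∑ i ∈ range m', (c m' ^ p * a (i + 1)) • u (i + 1) + (c m' ^ p * a 0) • u 0 := by
      rw [Finset.sum_range_succ' (fun i => c m' ^ p • (a i • u i)) m']
      simp [smul_smul]
    rw [hlast, ← add_assoc, ← Finset.sum_add_distrib]
    have hterm : ∀ i ∈ range m', (c i ^ p • u (i + 1) + (c m' ^ p * a (i + 1)) • u (i + 1))
        = c (i + 1) • u (i + 1) := by
      intro i _
      rw [← add_smul, hcs i, hcm']
      ring_nf
    rw [Finset.sum_congr rfl hterm]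
    have hv' : v = ∑ i ∈ range m', c (i + 1) • u (i + 1) + c 0 • u 0 := by
      rw [hv, Finset.sum_range_succ' (fun i => c i • u i) m']
    rw [hv', hc0, hcm']
    ring_nf
  exact ⟨v, hvne, hψfix v hfix⟩


lemma sol_equiv : ∀ (n : ℕ) (A : Matrix (Fin n) (Fin n) k), IsUnit A.det →
    Nonempty ({x : Fin n → k // (fun i => x i ^ p) = A.mulVec x} ≃ (Fin n → ZMod p)) := by
  intro n
  induction n with
  | zero =>
    intro A hA
    refine ⟨⟨fun _ => default, fun _ => ⟨default, ?_⟩, ?_, ?_⟩⟩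
    · funext i; exact i.elim0
    · intro x; apply Subtype.ext; funext i; exact i.elim0
    · intro y; funext i; exact i.elim0
  | succ n ih =>
    intro A hA
    have hp2 : 2 ≤ p := (Fact.out : p.Prime).two_le
    classical
    obtain ⟨v, hvne, hvsol⟩ := exists_nonzero_sol (p := p) (Nat.succ_pos n) A hA
    have hvi : ∃ i₀, v i₀ ≠ 0 := by
      by_contra hcon
      push_neg at hcon
      exact hvne (funext fun i => hcon i)
    obtain ⟨i₀, hi₀⟩ := hvi
    -- change of basis matrix with first column v
    set Cm : Matrix (Fin (n+1)) (Fin (n+1)) k :=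
      Matrix.of (fun i j => Fin.cases (v i) (fun j' => if i = i₀.succAbove j' then 1 else 0) j)
      with hCm
    have hCmulVec : ∀ y : Fin (n+1) → k,
        Cm *ᵥ y = fun i => v i * y 0 + ∑ j' : Fin n, (if i = i₀.succAbove j' then 1 else 0) * y j'.succ := by
      intro y
      funext i
      rw [Matrix.mulVec, dotProduct, Fin.sum_univ_succ]
      rfl
    have hCinj : ∀ y, Cm *ᵥ y = 0 → y = 0 := by
      intro y hy
      have h0 : y 0 = 0 := by
        have := congrFun hy i₀
        rw [hCmulVec] at this
        simp only [Pi.zero_apply] at this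
        have hz : ∀ j' : Fin n, (if i₀ = i₀.succAbove j' then (1:k) else 0) * y j'.succ = 0 := by
          intro j'
          rw [if_neg (Fin.succAbove_ne i₀ j').symm, zero_mul]
        rw [Finset.sum_eq_zero (fun j' _ => hz j'), add_zero] at this
        exact (mul_eq_zero.mp this).resolve_left hi₀
      funext i
      refine Fin.cases h0 (fun j' => ?_) i
      have := congrFun hy (i₀.succAbove j')
      rw [hCmulVec] at this
      simp only [Pi.zero_apply, h0, mul_zero, zero_add] at this
      rw [Finset.sum_eq_single j'] at this
      · simpa using this
      · intro b _ hb
        rw [if_neg (fun h : i₀.succAbove j' = i₀.succAbove b => hb (Fin.succAbove_right_injective h).symm), zero_mul]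
      · intro h; exact absurd (Finset.mem_univ j') h
    have hCdet : IsUnit Cm.det := by
      rw [isUnit_iff_ne_zero]
      intro hdet
      obtain ⟨y, hyne, hy⟩ := (Matrix.exists_mulVec_eq_zero_iff).mpr hdet
      exact hyne (hCinj y hy)
    set Cp : Matrix (Fin (n+1)) (Fin (n+1)) k := Cm.map (frobenius k p) with hCp
    have hCpdet : IsUnit Cp.det := by
      rw [hCp, ← RingHom.mapMatrix_apply, ← RingHom.map_det]
      exact hCdet.map (frobenius k p)
    set A' : Matrix (Fin (n+1)) (Fin (n+1)) k := Cp⁻¹ * A * Cm with hA'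
    have hCpinv : Cp⁻¹ * Cp = 1 := Matrix.nonsing_inv_mul Cp hCpdet
    have hCpinv' : Cp * Cp⁻¹ = 1 := Matrix.mul_nonsing_inv Cp hCpdet
    -- Frobenius-compatibility of Cm
    have hfrob : ∀ y : Fin (n+1) → k, (fun i => (Cm *ᵥ y) i ^ p) = Cp *ᵥ (fun i => y i ^ p) := by
      intro y
      funext i
      rw [Matrix.mulVec, dotProduct, sum_pow_char]
      rw [Matrix.mulVec, dotProduct]
      refine Finset.sum_congr rfl (fun j _ => ?_)
      rw [mul_pow, hCp, Matrix.map_apply, frobenius_def]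
    -- transport of the equation
    have helper : ∀ y : Fin (n+1) → k, A' *ᵥ y = Cp⁻¹ *ᵥ (A *ᵥ (Cm *ᵥ y)) := by
      intro y
      rw [Matrix.mulVec_mulVec, Matrix.mulVec_mulVec, hA']
    have htrans : ∀ y : Fin (n+1) → k,
        ((fun i => (Cm *ᵥ y) i ^ p) = A *ᵥ (Cm *ᵥ y)) ↔ ((fun i => y i ^ p) = A' *ᵥ y) := by
      intro y
      rw [hfrob y]
      constructor
      · intro h
        rw [helper y, ← h, Matrix.mulVec_mulVec, hCpinv, Matrix.one_mulVec]
      · intro h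
        rw [h, Matrix.mulVec_mulVec, Matrix.mulVec_mulVec, hA']
        congr 1
        simp only [← Matrix.mul_assoc]
        rw [hCpinv', Matrix.one_mul]
    -- the equivalence between solution sets of A and A'
    have e1 : {x : Fin (n+1) → k // (fun i => x i ^ p) = A.mulVec x}
        ≃ {y : Fin (n+1) → k // (fun i => y i ^ p) = A'.mulVec y} := by
      refine ⟨fun x => ⟨Cm⁻¹ *ᵥ x.1, ?_⟩, fun y => ⟨Cm *ᵥ y.1, (htrans y.1).mpr y.2⟩, ?_, ?_⟩
      · have hx : Cm *ᵥ (Cm⁻¹ *ᵥ x.1) = x.1 := by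
          rw [Matrix.mulVec_mulVec, Matrix.mul_nonsing_inv Cm hCdet, Matrix.one_mulVec]
        rw [← (htrans (Cm⁻¹ *ᵥ x.1)), hx]
        exact x.2
      · intro x
        apply Subtype.ext
        show Cm *ᵥ (Cm⁻¹ *ᵥ x.1) = x.1
        rw [Matrix.mulVec_mulVec, Matrix.mul_nonsing_inv Cm hCdet, Matrix.one_mulVec]
      · intro y
        apply Subtype.ext
        show Cm⁻¹ *ᵥ (Cm *ᵥ y.1) = y.1
        rw [Matrix.mulVec_mulVec, Matrix.nonsing_inv_mul Cm hCdet, Matrix.one_mulVec]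
    -- first column of A'
    have hA'col : ∀ i, A' i 0 = if i = 0 then 1 else 0 := by
      have hCe : Cm *ᵥ Pi.single 0 1 = v := by
        rw [Matrix.mulVec_single_one]
        funext i
        rfl
      have hAv : A *ᵥ v = Cp *ᵥ Pi.single 0 1 := by
        rw [← hvsol, Matrix.mulVec_single_one]
        funext i
        rw [Matrix.col_apply, hCp, Matrix.map_apply, frobenius_def]
        rfl
      have hA'e : A' *ᵥ Pi.single 0 1 = Pi.single 0 1 := by
        rw [helper, hCe, hAv, Matrix.mulVec_mulVec, hCpinv, Matrix.one_mulVec]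
      intro i
      have := congrFun hA'e i
      simp only [Matrix.mulVec_single_one, Matrix.col_apply] at this
      rw [this, Pi.single_apply]
    -- the submatrix
    set A'' : Matrix (Fin n) (Fin n) k := A'.submatrix Fin.succ Fin.succ with hA''
    have hdetA' : IsUnit A'.det := by
      rw [hA', Matrix.det_mul, Matrix.det_mul]
      refine IsUnit.mul (IsUnit.mul ?_ hA) hCdet
      rw [Matrix.det_nonsing_inv]
      exact isUnit_ringInverse.mpr hCpdet
    have hdetA'' : IsUnit A''.det := by
      have hd : A'.det = A''.det := by
        rw [Matrix.det_succ_column_zero]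
        rw [Finset.sum_eq_single (0 : Fin (n+1))]
        · rw [hA'col 0, if_pos rfl, Fin.succAbove_zero]
          simp [hA'']
        · intro b _ hb
          rw [hA'col b, if_neg hb]
          ring
        · intro h; exact absurd (Finset.mem_univ _) h
      rwa [← hd]
    -- split a solution of A' into head and tail
    set g : (Fin n → k) → k := fun z => ∑ j : Fin n, A' 0 j.succ * z j with hgdef
    have hcrow : ∀ y : Fin (n+1) → k,
        ((fun i => y i ^ p) = A'.mulVec y) ↔
        (((fun i => (y ∘ Fin.succ) i ^ p) = A''.mulVec (y ∘ Fin.succ)) ∧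
          (y 0 ^ p - y 0 = g (y ∘ Fin.succ))) := by
      intro y
      rw [funext_iff]
      constructor
      · intro h
        refine ⟨funext (fun i => ?_), ?_⟩
        · have h2 := h i.succ
          rw [Matrix.mulVec, dotProduct, Fin.sum_univ_succ, hA'col i.succ,
            if_neg (Fin.succ_ne_zero i), zero_mul, zero_add] at h2
          rw [hA'']
          exact h2
        · have h2 := h 0
          rw [Matrix.mulVec, dotProduct, Fin.sum_univ_succ, hA'col 0, if_pos rfl, one_mul] at h2
          rw [h2, hgdef]
          simp [Function.comp_apply]
      · rintro ⟨h1, h2⟩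
        intro i
        refine Fin.cases ?_ (fun i' => ?_) i
        · rw [Matrix.mulVec, dotProduct, Fin.sum_univ_succ, hA'col 0, if_pos rfl, one_mul]
          rw [hgdef] at h2
          simp only [Function.comp_apply] at h2
          linear_combination h2
        · rw [Matrix.mulVec, dotProduct, Fin.sum_univ_succ, hA'col i'.succ,
            if_neg (Fin.succ_ne_zero i'), zero_mul, zero_add]
          have := congrFun h1 i'
          rw [hA''] at this
          exact this
    -- Artin-Schreier section and prime-field retraction
    set r : k → k := fun c => Classical.choose (exists_AS_root (p := p) c) with hrdef
    have hr : ∀ c : k, (r c) ^ p - r c = c :=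
      fun c => Classical.choose_spec (exists_AS_root (p := p) c)
    set ξ : k → ZMod p := Function.invFun (algebraMap (ZMod p) k) with hξdef
    have hξ1 : ∀ s : k, s ^ p = s → algebraMap (ZMod p) k (ξ s) = s := by
      intro s hs
      obtain ⟨a, ha⟩ := (pow_p_eq_self_iff (p := p) s).mp hs
      exact Function.invFun_eq ⟨a, ha⟩
    have hξ2 : ∀ a : ZMod p, ξ (algebraMap (ZMod p) k a) = a :=
      fun a => Function.leftInverse_invFun (algebraMap (ZMod p) k).injective a
    have hmap_pow : ∀ a : ZMod p, (algebraMap (ZMod p) k a) ^ p = algebraMap (ZMod p) k a := by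
      intro a
      rw [← map_pow, ZMod.pow_card]
    -- the product equivalence
    obtain ⟨e3⟩ := ih A'' hdetA''
    have e2 : {y : Fin (n+1) → k // (fun i => y i ^ p) = A'.mulVec y}
        ≃ {z : Fin n → k // (fun i => z i ^ p) = A''.mulVec z} × ZMod p := by
      refine ⟨fun y => ⟨⟨y.1 ∘ Fin.succ, ((hcrow y.1).mp y.2).1⟩,
          ξ (y.1 0 - r (g (y.1 ∘ Fin.succ)))⟩,
        fun za => ⟨Fin.cons (r (g za.1.1) + algebraMap (ZMod p) k za.2) za.1.1, ?_⟩, ?_, ?_⟩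
      · rw [hcrow]
        have ht : (Fin.cons (r (g za.1.1) + algebraMap (ZMod p) k za.2) za.1.1
            : Fin (n+1) → k) ∘ Fin.succ = za.1.1 := by
          funext i; exact Fin.cons_succ _ _ i
        rw [ht]
        refine ⟨za.1.2, ?_⟩
        rw [Fin.cons_zero, add_pow_char, hmap_pow]
        linear_combination hr (g za.1.1)
      · intro y
        apply Subtype.ext
        have hs : (y.1 0 - r (g (y.1 ∘ Fin.succ))) ^ p = y.1 0 - r (g (y.1 ∘ Fin.succ)) := by
          rw [sub_pow_char]
          have h2 := ((hcrow y.1).mp y.2).2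
          linear_combination h2 - hr (g (y.1 ∘ Fin.succ))
        show (Fin.cons (r (g (y.1 ∘ Fin.succ)) + algebraMap (ZMod p) k (ξ (y.1 0 - r (g (y.1 ∘ Fin.succ)))))
          (y.1 ∘ Fin.succ) : Fin (n+1) → k) = y.1
        funext i
        refine Fin.cases ?_ (fun i' => ?_) i
        · rw [Fin.cons_zero, hξ1 _ hs]
          ring
        · rw [Fin.cons_succ]
          rfl
      · intro za
        have ht : (Fin.cons (r (g za.1.1) + algebraMap (ZMod p) k za.2) za.1.1
            : Fin (n+1) → k) ∘ Fin.succ = za.1.1 := by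
          funext i; exact Fin.cons_succ _ _ i
        refine Prod.ext ?_ ?_
        · apply Subtype.ext
          exact ht
        · show ξ ((Fin.cons (r (g za.1.1) + algebraMap (ZMod p) k za.2) za.1.1 : Fin (n+1) → k) 0
            - r (g ((Fin.cons (r (g za.1.1) + algebraMap (ZMod p) k za.2) za.1.1 : Fin (n+1) → k) ∘ Fin.succ))) = za.2
          rw [Fin.cons_zero, ht]
          rw [show r (g za.1.1) + algebraMap (ZMod p) k za.2 - r (g za.1.1)
            = algebraMap (ZMod p) k za.2 by ring]
          exact hξ2 za.2
    exact ⟨e1.trans (e2.trans ((e3.prodCongr (Equiv.refl (ZMod p))).trans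
      ((Equiv.prodComm _ _).trans (Fin.consEquiv (fun _ : Fin (n+1) => ZMod p)))))⟩


end LangAux

/-- Over an algebraically closed field of characteristic `p`, the solutions of
`x^{(p)} = A x` for invertible `A` form an `𝔽_p`-subspace of dimension exactly `n`. -/

theorem stmt8 (p : ℕ) [Fact p.Prime] (k : Type) [Field k] [IsAlgClosed k]
    [CharP k p] [Algebra (ZMod p) k] (n : ℕ)
    (A : Matrix (Fin n) (Fin n) k) (hA : IsUnit A.det) :
    ∃ S : Submodule (ZMod p) (Fin n → k),
      (S : Set (Fin n → k)) = {x | (fun i => x i ^ p) = A.mulVec x} ∧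
      Module.finrank (ZMod p) S = n := by
  classical
  have hp2 : 2 ≤ p := (Fact.out : p.Prime).two_le
  refine ⟨{ carrier := {x | (fun i => x i ^ p) = A.mulVec x}
            add_mem' := ?_
            zero_mem' := ?_
            smul_mem' := ?_ }, rfl, ?_⟩
  · intro a b ha hb
    simp only [Set.mem_setOf_eq] at ha hb ⊢
    funext i
    rw [Pi.add_apply, add_pow_char, congrFun ha i, congrFun hb i, Matrix.mulVec_add,
      Pi.add_apply]
  · simp only [Set.mem_setOf_eq]
    funext i
    rw [Pi.zero_apply, zero_pow (by omega : p ≠ 0), Matrix.mulVec_zero, Pi.zero_apply]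
  · intro c x hx
    simp only [Set.mem_setOf_eq] at hx ⊢
    funext i
    have h1 : A.mulVec (c • x) i = algebraMap (ZMod p) k c * A.mulVec x i := by
      rw [Matrix.mulVec, Matrix.mulVec, dotProduct, dotProduct, Finset.mul_sum]
      refine Finset.sum_congr rfl fun j _ => ?_
      rw [Pi.smul_apply, Algebra.smul_def]; ring
    rw [h1, Pi.smul_apply, Algebra.smul_def, mul_pow, ← map_pow, ZMod.pow_card,
      ← congrFun hx i]
  · obtain ⟨e⟩ := sol_equiv (p := p) n A hA
    set S : Submodule (ZMod p) (Fin n → k) :=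
      { carrier := {x | (fun i => x i ^ p) = A.mulVec x}
        add_mem' := by
          intro a b ha hb
          simp only [Set.mem_setOf_eq] at ha hb ⊢
          funext i
          rw [Pi.add_apply, add_pow_char, congrFun ha i, congrFun hb i, Matrix.mulVec_add,
            Pi.add_apply]
        zero_mem' := by
          simp only [Set.mem_setOf_eq]
          funext i
          rw [Pi.zero_apply, zero_pow (by omega : p ≠ 0), Matrix.mulVec_zero, Pi.zero_apply]
        smul_mem' := by
          intro c x hx
          simp only [Set.mem_setOf_eq] at hx ⊢
          funext i
          have h1 : A.mulVec (c • x) i = algebraMap (ZMod p) k c * A.mulVec x i := by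
            rw [Matrix.mulVec, Matrix.mulVec, dotProduct, dotProduct, Finset.mul_sum]
            refine Finset.sum_congr rfl fun j _ => ?_
            rw [Pi.smul_apply, Algebra.smul_def]; ring
          rw [h1, Pi.smul_apply, Algebra.smul_def, mul_pow, ← map_pow, ZMod.pow_card,
            ← congrFun hx i] }
    have eS : S ≃ (Fin n → ZMod p) :=
      (Equiv.subtypeEquivRight (fun x => Iff.rfl)).trans e
    haveI : Finite S := Finite.of_equiv _ eS.symm
    letI : Fintype S := Fintype.ofFinite S
    have hcard1 : Fintype.card S = p ^ n := by
      rw [← Nat.card_eq_fintype_card, Nat.card_congr eS, Nat.card_eq_fintype_card,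
        Fintype.card_fun, ZMod.card, Fintype.card_fin]
    have hcard2 : Fintype.card S = p ^ Module.finrank (ZMod p) S := by
      have := Module.card_eq_pow_finrank (K := ZMod p) (V := S)
      rwa [ZMod.card] at this
    refine (Nat.pow_right_injective hp2 ?_).symm
    show p ^ n = p ^ Module.finrank (ZMod p) S
    rw [← hcard1, hcard2]
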